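/- Let 𝒟 be a finite set with |𝒟| = n ≥ 2 and let 1 ≤ k ≤ n−1. For p ∈ (0,1], let 𝒜_p be the randomized algorithm which, on input a size-k subset D ⊆ 𝒟, outputs the random subset S ⊆ D obtained by including each element of D independently with probability p. Then for every η > 0 there exists p₀ > 0 such that for all 0 < p ≤ p₀, the algorithm 𝒜_p is η-MIP with respect to 𝒟: for every x* ∈ 𝒟 and every identification algorithm ℐ, P(ℐ(x*, 𝒜_p(D_train)) = y*) ≤ max{k/n, 1 − k/n} + η. -/

import Mathlib

lemma aux_sum_one {α : Type*} [DecidableEq α] (p : ℝ) (D : Finset α) :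
    ∑ S ∈ D.powerset, p ^ S.card * (1 - p) ^ (D.card - S.card) = 1 := by
  have h := add_pow p (1 - p) D.card
  simp only [add_sub_cancel, one_pow] at h
  calc ∑ S ∈ D.powerset, p ^ S.card * (1 - p) ^ (D.card - S.card)
      = ∑ m ∈ Finset.range (D.card + 1),
          (D.card).choose m • (p ^ m * (1 - p) ^ (D.card - m)) :=
        Finset.sum_powerset_apply_card (fun m => p ^ m * (1 - p) ^ (D.card - m))
    _ = ∑ m ∈ Finset.range (D.card + 1),
          p ^ m * (1 - p) ^ (D.card - m) * (D.card).choose m := by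
        refine Finset.sum_congr rfl fun m _ => ?_
        rw [nsmul_eq_mul]; ring
    _ = 1 := h.symm

lemma aux_count {α : Type*} [DecidableEq α] (𝒟 : Finset α) (k : ℕ) (x : α) (hx : x ∈ 𝒟)
    (hk : 1 ≤ k) :
    ((𝒟.powersetCard k).filter (fun D => x ∈ D)).card = (𝒟.card - 1).choose (k - 1) := by
  rw [← Finset.card_erase_of_mem hx, ← Finset.card_powersetCard]
  refine Finset.card_bij' (fun D _ => D.erase x) (fun S _ => insert x S)
    ?hi ?hj ?li ?ri
  case hi =>
    intro D hD
    simp only [Finset.mem_filter, Finset.mem_powersetCard] at hD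
    rw [Finset.mem_powersetCard]
    exact ⟨Finset.erase_subset_erase x hD.1.1,
      by rw [Finset.card_erase_of_mem hD.2, hD.1.2]⟩
  case hj =>
    intro S hS
    rw [Finset.mem_powersetCard] at hS
    have hxS : x ∉ S := fun h => (Finset.mem_erase.mp (hS.1 h)).1 rfl
    simp only [Finset.mem_filter, Finset.mem_powersetCard]
    refine ⟨⟨Finset.insert_subset hx (hS.1.trans (Finset.erase_subset x 𝒟)), ?_⟩,
      Finset.mem_insert_self x S⟩
    rw [Finset.card_insert_of_notMem hxS, hS.2]
    omega
  case li =>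
    intro D hD
    simp only [Finset.mem_filter] at hD
    exact Finset.insert_erase hD.2
  case ri =>
    intro S hS
    rw [Finset.mem_powersetCard] at hS
    have hxS : x ∉ S := fun h => (Finset.mem_erase.mp (hS.1 h)).1 rfl
    exact Finset.erase_insert hxS


theorem statement_17 {α : Type*} [DecidableEq α]
    (n k : ℕ) (hn : 2 ≤ n) (hk1 : 1 ≤ k) (hk2 : k ≤ n - 1)
    (𝒟 : Finset α) (hcard : 𝒟.card = n)
    (𝒜 : ℝ → Finset α → Finset α → ℝ)
    (h𝒜 : ∀ p D S, 𝒜 p D S =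
      if S ⊆ D then p ^ S.card * (1 - p) ^ (D.card - S.card) else 0)
    (η : ℝ) (hη : 0 < η) :
    ∃ p₀ : ℝ, 0 < p₀ ∧ ∀ p : ℝ, 0 < p → p ≤ p₀ →
      ∀ x ∈ 𝒟, ∀ ℐ : Finset α → ℝ, (∀ S, ℐ S ∈ Set.Icc (0 : ℝ) 1) →
        ((𝒟.powersetCard k).card : ℝ)⁻¹ *
            (∑ D ∈ 𝒟.powersetCard k, ∑ S ∈ 𝒟.powerset,
              𝒜 p D S * (if x ∈ D then ℐ S else 1 - ℐ S))
          ≤ max ((k : ℝ) / n) (1 - (k : ℝ) / n) + η := by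
  have hk0 : (0 : ℝ) < k := by exact_mod_cast hk1
  have hn0 : (0 : ℝ) < n := by positivity
  refine ⟨min (η / k) 1, lt_min (div_pos hη hk0) one_pos, ?_⟩
  intro p hp hpmin x hx ℐ hℐ
  have hp1 : p ≤ 1 := le_trans hpmin (min_le_right _ _)
  have hpη : (k : ℝ) * p ≤ η := by
    have := le_trans hpmin (min_le_left _ _)
    rw [le_div_iff₀ hk0] at this; linarith
  have h1p : (0 : ℝ) ≤ 1 - p := by linarith
  set q : ℝ := (1 - p) ^ k with hq_def
  have hq0 : 0 ≤ q := pow_nonneg h1p k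
  have hq1 : q ≤ 1 := pow_le_one₀ h1p (by linarith)
  have hbern : 1 - q ≤ η := by
    have h := one_add_mul_le_pow (show (-2 : ℝ) ≤ -p by linarith) k
    have h2 : 1 + (k : ℝ) * (-p) ≤ q := by
      simpa [hq_def, sub_eq_add_neg] using h
    linarith
  -- counting
  set Cn := (𝒟.powersetCard k).card with hCn_def
  set An := ((𝒟.powersetCard k).filter (fun D => x ∈ D)).card with hAn_def
  have hCn : Cn = n.choose k := by rw [hCn_def, Finset.card_powersetCard, hcard]
  have hCpos : 0 < Cn := by rw [hCn]; exact Nat.choose_pos (by omega)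
  have hAn : An = (n - 1).choose (k - 1) := by
    rw [hAn_def, aux_count 𝒟 k x hx hk1, hcard]
  have hNat : n * An = Cn * k := by
    have h := Nat.add_one_mul_choose_eq (n - 1) (k - 1)
    have e1 : n - 1 + 1 = n := by omega
    have e2 : k - 1 + 1 = k := by omega
    rw [e1, e2] at h
    rw [hAn, hCn]; exact h
  have hCR : (0 : ℝ) < (Cn : ℝ) := by exact_mod_cast hCpos
  set a : ℝ := (k : ℝ) / n with ha_def
  have hA_eq : (An : ℝ) = a * Cn := by
    have hc : (n : ℝ) * An = Cn * k := by exact_mod_cast hNat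
    rw [ha_def]; field_simp; linarith
  obtain ⟨ht0, ht1⟩ := hℐ ∅
  -- per-D bound
  have key : ∀ D ∈ 𝒟.powersetCard k,
      ∑ S ∈ 𝒟.powerset, 𝒜 p D S * (if x ∈ D then ℐ S else 1 - ℐ S)
        ≤ q * (if x ∈ D then ℐ ∅ else 1 - ℐ ∅) + (1 - q) := by
    intro D hD
    obtain ⟨hDsub, hDcard⟩ := Finset.mem_powersetCard.mp hD
    have hpay : ∀ S : Finset α, 0 ≤ (if x ∈ D then ℐ S else 1 - ℐ S) ∧
        (if x ∈ D then ℐ S else 1 - ℐ S) ≤ 1 := by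
      intro S
      obtain ⟨h0, h1⟩ := hℐ S
      split <;> constructor <;> linarith
    have hrestrict : ∑ S ∈ 𝒟.powerset, 𝒜 p D S * (if x ∈ D then ℐ S else 1 - ℐ S)
        = ∑ S ∈ D.powerset, 𝒜 p D S * (if x ∈ D then ℐ S else 1 - ℐ S) := by
      refine (Finset.sum_subset (Finset.powerset_mono.mpr hDsub) ?_).symm
      intro S _ hS
      rw [Finset.mem_powerset] at hS
      rw [h𝒜, if_neg hS, zero_mul]
    have hAnn : ∀ S ∈ D.powerset, 𝒜 p D S = p ^ S.card * (1 - p) ^ (D.card - S.card) := by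
      intro S hS
      rw [h𝒜, if_pos (Finset.mem_powerset.mp hS)]
    have hsum1 : ∑ S ∈ D.powerset, 𝒜 p D S = 1 := by
      rw [Finset.sum_congr rfl hAnn]; exact aux_sum_one p D
    have hmem : (∅ : Finset α) ∈ D.powerset := Finset.empty_mem_powerset D
    have hA0 : 𝒜 p D ∅ = q := by
      rw [h𝒜, if_pos (Finset.empty_subset D)]
      simp [hq_def, hDcard]
    have hAnonneg : ∀ S ∈ D.powerset, 0 ≤ 𝒜 p D S := by
      intro S hS
      rw [hAnn S hS]; positivity
    have h2 : ∑ S ∈ D.powerset.erase ∅, 𝒜 p D S * (if x ∈ D then ℐ S else 1 - ℐ S)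
        ≤ ∑ S ∈ D.powerset.erase ∅, 𝒜 p D S :=
      Finset.sum_le_sum fun S hS =>
        mul_le_of_le_one_right (hAnonneg S (Finset.mem_of_mem_erase hS)) (hpay S).2
    have h3 : ∑ S ∈ D.powerset.erase ∅, 𝒜 p D S = 1 - q := by
      have h4 := Finset.add_sum_erase _ (𝒜 p D) hmem
      rw [hA0, hsum1] at h4; linarith
    rw [hrestrict, ← Finset.add_sum_erase _ _ hmem, hA0]
    exact add_le_add le_rfl (h3 ▸ h2)
  -- compute the sum of the upper bounds
  have hfneg : (((𝒟.powersetCard k).filter (fun D => ¬ x ∈ D)).card : ℝ) = (Cn : ℝ) - An := by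
    have h := Finset.card_filter_add_card_filter_not
      (s := 𝒟.powersetCard k) (p := fun D => x ∈ D)
    rw [← hAn_def, ← hCn_def] at h
    have h' : ((𝒟.powersetCard k).filter (fun D => ¬ x ∈ D)).card = Cn - An := by omega
    rw [h']
    have hle : An ≤ Cn := by omega
    push_cast [hle]
    ring
  have hsum2 : ∑ D ∈ 𝒟.powersetCard k, (q * (if x ∈ D then ℐ ∅ else 1 - ℐ ∅) + (1 - q))
      = q * ((An : ℝ) * ℐ ∅ + ((Cn : ℝ) - An) * (1 - ℐ ∅)) + (Cn : ℝ) * (1 - q) := by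
    rw [Finset.sum_add_distrib, Finset.sum_const, nsmul_eq_mul, ← hCn_def,
      ← Finset.mul_sum, Finset.sum_ite, Finset.sum_const, Finset.sum_const,
      nsmul_eq_mul, nsmul_eq_mul, ← hAn_def, hfneg]
  -- finish
  have ha0 : 0 ≤ a := by positivity
  have ha1 : a ≤ 1 := by
    rw [ha_def, div_le_one hn0]
    exact_mod_cast (by omega : k ≤ n)
  set M : ℝ := max ((k : ℝ) / n) (1 - (k : ℝ) / n) with hM_def
  have hMa : a ≤ M := le_max_left _ _
  have hM1 : 1 - a ≤ M := le_max_right _ _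
  have hX0 : 0 ≤ a * ℐ ∅ + (1 - a) * (1 - ℐ ∅) := by
    have := mul_nonneg ha0 ht0
    have := mul_nonneg (by linarith : (0:ℝ) ≤ 1 - a) (by linarith : (0:ℝ) ≤ 1 - ℐ ∅)
    linarith
  have hXM : a * ℐ ∅ + (1 - a) * (1 - ℐ ∅) ≤ M := by nlinarith
  calc ((Cn : ℝ))⁻¹ *
        (∑ D ∈ 𝒟.powersetCard k, ∑ S ∈ 𝒟.powerset,
          𝒜 p D S * (if x ∈ D then ℐ S else 1 - ℐ S))
      ≤ (Cn : ℝ)⁻¹ * ∑ D ∈ 𝒟.powersetCard k,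
          (q * (if x ∈ D then ℐ ∅ else 1 - ℐ ∅) + (1 - q)) :=
        mul_le_mul_of_nonneg_left (Finset.sum_le_sum key) (inv_nonneg.mpr hCR.le)
    _ = q * (a * ℐ ∅ + (1 - a) * (1 - ℐ ∅)) + (1 - q) := by
        rw [hsum2, hA_eq]
        field_simp
    _ ≤ M + η := by
        have h5 : q * (a * ℐ ∅ + (1 - a) * (1 - ℐ ∅)) ≤ M :=
          le_trans (mul_le_of_le_one_left hX0 hq1) hXM
        linarith
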